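/- Let Y be an abelian group and l₁, l₂ : Y → ℂ functions with |l_k(u)| = 1, l_k(0) = 1, l_k(−u) = conj(l_k(u)), satisfying l₁(u+v)·l₂(u−v) = l₁(u)·l₂(u)·l₁(v)·l₂(−v) for all u, v ∈ Y. Then l_k(2u) = l_k(u)² for all u ∈ Y and k = 1, 2. -/

import Mathlib

theorem stmt_2 {Y : Type*} [AddCommGroup Y] (l₁ l₂ : Y → ℂ)
    (hmod : ∀ u : Y, ‖l₁ u‖ = 1 ∧ ‖l₂ u‖ = 1)
    (h0 : l₁ 0 = 1 ∧ l₂ 0 = 1)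
    (hsym : ∀ u : Y, l₁ (-u) = (starRingEnd ℂ) (l₁ u) ∧
      l₂ (-u) = (starRingEnd ℂ) (l₂ u))
    (heq : ∀ u v : Y,
      l₁ (u + v) * l₂ (u - v) = l₁ u * l₂ u * l₁ v * l₂ (-v)) :
    ∀ u : Y, l₁ (u + u) = (l₁ u) ^ 2 ∧ l₂ (u + u) = (l₂ u) ^ 2 := by
  intro u
  have h1 : l₁ u * (starRingEnd ℂ) (l₁ u) = 1 := by
    rw [Complex.mul_conj', (hmod u).1]; norm_num
  have h2 : l₂ u * (starRingEnd ℂ) (l₂ u) = 1 := by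
    rw [Complex.mul_conj', (hmod u).2]; norm_num
  constructor
  · have := heq u u
    rw [sub_self, h0.2, (hsym u).2, mul_one] at this
    rw [this]; ring_nf
    rw [mul_assoc, h2, mul_one]
  · have := heq u (-u)
    rw [add_neg_cancel, h0.1, sub_neg_eq_add, neg_neg, (hsym u).1, one_mul] at this
    linear_combination this + (l₂ u ^ 2) * h1
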